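/- Let U : ℝ → ℝ be three times differentiable and satisfy U''' + 3(U−1)·U'' + U'² + 2(U−1)²·U' = 0 everywhere. Define R : (0,∞) → ℝ by R(Q) = U(log Q)/Q. Then R satisfies 3R'' + 7R·R' + 2R³ + Q·(R''' + 3R·R'' + R'² + 2R²·R') = 0 for all Q > 0. -/

import Mathlib

private lemma aux_hasDeriv (W : ℝ → ℝ) (hW : Differentiable ℝ W) (n : ℕ) (hn : n ≠ 0)
    (Q : ℝ) (hQ : 0 < Q) :
    HasDerivAt (fun x => W (Real.log x) / x ^ n)
      ((deriv W (Real.log Q) - n * W (Real.log Q)) / Q ^ (n + 1)) Q := by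
  have hlog := Real.hasDerivAt_log hQ.ne'
  have hW' := ((hW (Real.log Q)).hasDerivAt).comp Q hlog
  have hpow : HasDerivAt (fun x : ℝ => x ^ n) ((n : ℝ) * Q ^ (n - 1)) Q := hasDerivAt_pow n Q
  have h := hW'.div hpow (pow_ne_zero n hQ.ne')
  refine h.congr_deriv ?_
  obtain ⟨m, rfl⟩ := Nat.exists_eq_succ_of_ne_zero hn
  field_simp
  simp only [Nat.succ_sub_one, pow_succ, Nat.succ_eq_add_one, Function.comp_apply]
  ring

/-- if `U` is three times differentiable and satisfies
`U''' + 3(U−1)U'' + U'² + 2(U−1)²U' = 0` everywhere, then `R(Q) = U(log Q)/Q`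
satisfies `3R'' + 7RR' + 2R³ + Q(R''' + 3RR'' + R'² + 2R²R') = 0` for all `Q > 0`. -/
theorem stmt_12 (U : ℝ → ℝ)
    (hU1 : Differentiable ℝ U)
    (hU2 : Differentiable ℝ (deriv U))
    (hU3 : Differentiable ℝ (deriv (deriv U)))
    (hUode : ∀ s : ℝ, deriv (deriv (deriv U)) s + 3 * (U s - 1) * deriv (deriv U) s
      + (deriv U s) ^ 2 + 2 * (U s - 1) ^ 2 * deriv U s = 0)
    (R : ℝ → ℝ) (hR : ∀ Q : ℝ, 0 < Q → R Q = U (Real.log Q) / Q) :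
    ∀ Q : ℝ, 0 < Q →
      3 * deriv (deriv R) Q + 7 * R Q * deriv R Q + 2 * R Q ^ 3
        + Q * (deriv (deriv (deriv R)) Q + 3 * R Q * deriv (deriv R) Q
            + (deriv R Q) ^ 2 + 2 * R Q ^ 2 * deriv R Q) = 0 := by
  set W1 : ℝ → ℝ := fun s => deriv U s - U s with hW1def
  set W2 : ℝ → ℝ := fun s => deriv (deriv U) s - 3 * deriv U s + 2 * U s with hW2def
  have hW1 : Differentiable ℝ W1 := hU2.sub hU1
  have hW2 : Differentiable ℝ W2 := (hU3.sub (hU2.const_mul 3)).add (hU1.const_mul 2)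
  have hW1' : ∀ s, deriv W1 s = deriv (deriv U) s - deriv U s := by
    intro s
    rw [hW1def, deriv_fun_sub (hU2 s) (hU1 s)]
  have hW2' : ∀ s, deriv W2 s =
      deriv (deriv (deriv U)) s - 3 * deriv (deriv U) s + 2 * deriv U s := by
    intro s
    rw [hW2def]
    rw [deriv_fun_add (f := fun y => deriv (deriv U) y - 3 * deriv U y) ((hU3 s).sub ((hU2 s).const_mul 3)) ((hU1 s).const_mul 2),
      deriv_fun_sub (hU3 s) ((hU2 s).const_mul 3), deriv_const_mul 3 (hU2 s),
      deriv_const_mul 2 (hU1 s)]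
  have key1 : ∀ Q : ℝ, 0 < Q → deriv R Q = W1 (Real.log Q) / Q ^ 2 := by
    intro Q hQ
    have he : R =ᶠ[nhds Q] (fun x => U (Real.log x) / x ^ 1) := by
      filter_upwards [Ioi_mem_nhds hQ] with x hx
      simpa [pow_one] using hR x hx
    rw [he.deriv_eq, (aux_hasDeriv U hU1 1 one_ne_zero Q hQ).deriv]
    simp [hW1def]
  have key2 : ∀ Q : ℝ, 0 < Q → deriv (deriv R) Q = W2 (Real.log Q) / Q ^ 3 := by
    intro Q hQ
    have he : deriv R =ᶠ[nhds Q] (fun x => W1 (Real.log x) / x ^ 2) := by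
      filter_upwards [Ioi_mem_nhds hQ] with x hx
      exact key1 x hx
    rw [he.deriv_eq, (aux_hasDeriv W1 hW1 2 two_ne_zero Q hQ).deriv]
    rw [hW1' (Real.log Q)]
    simp only [hW1def, hW2def]
    push_cast
    ring
  have key3 : ∀ Q : ℝ, 0 < Q → deriv (deriv (deriv R)) Q =
      (deriv (deriv (deriv U)) (Real.log Q) - 6 * deriv (deriv U) (Real.log Q)
        + 11 * deriv U (Real.log Q) - 6 * U (Real.log Q)) / Q ^ 4 := by
    intro Q hQ
    have he : deriv (deriv R) =ᶠ[nhds Q] (fun x => W2 (Real.log x) / x ^ 3) := by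
      filter_upwards [Ioi_mem_nhds hQ] with x hx
      exact key2 x hx
    rw [he.deriv_eq, (aux_hasDeriv W2 hW2 3 three_ne_zero Q hQ).deriv]
    rw [hW2' (Real.log Q)]
    simp only [hW2def]
    push_cast
    ring
  intro Q hQ
  rw [hR Q hQ, key1 Q hQ, key2 Q hQ, key3 Q hQ]
  have hode := hUode (Real.log Q)
  simp only [hW1def, hW2def]
  have hQ4 : Q ^ 4 ≠ 0 := pow_ne_zero 4 hQ.ne'
  field_simp
  linear_combination hode
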